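/- For every integer n ≥ 1, the classical Bernoulli number satisfies B_n = n! · ∑_{t_1 + 2t_2 + ⋯ + n t_n = n} ( (t_1+⋯+t_n)! / (t_1! ⋯ t_n!) ) · (−1)^{t_1+⋯+t_n} · (1/2!)^{t_1} (1/3!)^{t_2} ⋯ (1/(n+1)!)^{t_n}, where the sum is over all n-tuples (t_1,…,t_n) of nonnegative integers with t_1 + 2t_2 + ⋯ + n t_n = n. -/

import Mathlib

open PowerSeries Finset

namespace Stmt17

noncomputable def F : ℚ⟦X⟧ := PowerSeries.mk fun j => 1 / (j + 1).factorial

lemma X_mul_F : (X : ℚ⟦X⟧) * F = exp ℚ - 1 := by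
  ext m
  cases m with
  | zero => simp [F, coeff_exp]
  | succ m => simp [F, coeff_succ_X_mul, coeff_exp, coeff_one]

lemma B_mul_F : bernoulliPowerSeries ℚ * F = 1 := by
  apply mul_left_cancel₀ (X_ne_zero (R := ℚ))
  rw [mul_one, ← mul_assoc, mul_comm X, mul_assoc, X_mul_F,
    bernoulliPowerSeries_mul_exp_sub_one]

lemma coeff_mul_pow_eq_zero {w v : ℚ⟦X⟧} {m N : ℕ} (hm : m < N)
    (hv : constantCoeff v = 0) : coeff m (w * v ^ N) = 0 := by
  have h : (X : ℚ⟦X⟧) ^ N ∣ w * v ^ N :=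
    Dvd.dvd.mul_left (pow_dvd_pow_of_dvd (X_dvd_iff.2 hv) N) w
  exact X_pow_dvd_iff.1 h m hm

lemma prod_fin_eq_Icc {M : Type*} [CommMonoid M] (n : ℕ) (g : ℕ → M) :
    ∏ j : Fin n, g ((j : ℕ) + 1) = ∏ i ∈ Icc 1 n, g i := by
  rw [show (∏ j : Fin n, g ((j : ℕ) + 1)) = ∏ j ∈ range n, g (j + 1) from Fin.prod_univ_eq_prod_range (fun j => g (j+1)) n]
  apply Finset.prod_nbij' (fun i => i + 1) (fun i => i - 1) <;>
    simp_all +contextual [Finset.mem_Icc] <;> omega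

lemma sum_fin_eq_Icc {M : Type*} [AddCommMonoid M] (n : ℕ) (g : ℕ → M) :
    ∑ j : Fin n, g ((j : ℕ) + 1) = ∑ i ∈ Icc 1 n, g i :=
  prod_fin_eq_Icc (M := Multiplicative M) n g

end Stmt17

namespace Stmt17

lemma bound {n : ℕ} {t : ℕ → ℕ} (h : ∑ i ∈ Icc 1 n, i * t i = n) (j : Fin n) :
    t ((j : ℕ) + 1) < n + 1 := by
  have hmem : (j : ℕ) + 1 ∈ Icc 1 n := by simp [Finset.mem_Icc]
  have h1 := Finset.single_le_sum (f := fun i => i * t i)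
    (fun i _ => Nat.zero_le _) hmem
  have h2 : t ((j : ℕ) + 1) ≤ ((j : ℕ) + 1) * t ((j : ℕ) + 1) :=
    Nat.le_mul_of_pos_left _ (by omega)
  have h1' : ((j : ℕ) + 1) * t ((j : ℕ) + 1) ≤ ∑ i ∈ Icc 1 n, i * t i := h1
  omega

def psi (n : ℕ) (s : Fin n → Fin (n + 1)) (i : ℕ) : ℕ :=
  if h : i - 1 < n ∧ i ∈ Icc 1 n then (s ⟨i - 1, h.1⟩ : ℕ) else 0

lemma psi_succ (n : ℕ) (s : Fin n → Fin (n + 1)) (j : Fin n) :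
    psi n s ((j : ℕ) + 1) = (s j : ℕ) := by
  have hj := j.isLt
  rw [psi, dif_pos ⟨by omega, by simp only [Finset.mem_Icc]; omega⟩]
  exact congrArg (fun x : Fin n => (s x : ℕ)) (Fin.ext (by simp))

lemma psi_not_mem (n : ℕ) (s : Fin n → Fin (n + 1)) (i : ℕ) (h : i ∉ Icc 1 n) :
    psi n s i = 0 := by
  rw [psi, dif_neg (by tauto)]

end Stmt17

open Stmt17 in
theorem stmt17 (n : ℕ) (hn : 1 ≤ n) :
    bernoulli n = (n.factorial : ℚ) *
      ∑ t ∈ Finset.univ.filter (fun t : Fin n → Fin (n + 1) =>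
          ∑ j : Fin n, ((j : ℕ) + 1) * (t j : ℕ) = n),
        ((∑ j : Fin n, (t j : ℕ)).factorial : ℚ) / (∏ j : Fin n, ((t j : ℕ).factorial : ℚ)) *
          (-1 : ℚ) ^ (∑ j : Fin n, (t j : ℕ)) *
          ∏ j : Fin n, ((1 : ℚ) / (((j : ℕ) + 2).factorial : ℚ)) ^ (t j : ℕ) := by
  classical
  set c : ℕ → ℚ := fun i => -(1 / (i + 1).factorial) with hc
  set u : ℚ⟦X⟧ := 1 - F with hu
  set U : ℚ⟦X⟧ := ∑ i ∈ Icc 1 n, PowerSeries.C (c i) * X ^ i with hU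
  have hu0 : constantCoeff u = 0 := by
    simp [hu, F, ← coeff_zero_eq_constantCoeff]
  have hcoeff_u : ∀ m, m ≤ n → coeff m u = coeff m U := by
    intro m hm
    have hL : coeff m u = if m = 0 then 0 else c m := by
      rcases Nat.eq_zero_or_pos m with h | h
      · subst h; simpa [← coeff_zero_eq_constantCoeff] using hu0
      · have : m ≠ 0 := by omega
        simp [hu, F, coeff_one, this, hc]
    have hR : coeff m U = if m ∈ Icc 1 n then c m else 0 := by
      rw [hU, map_sum]
      simp_rw [coeff_C_mul, coeff_X_pow]
      simp_rw [mul_ite, mul_one, mul_zero, eq_comm (a := m)]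
      rw [Finset.sum_ite_eq' (Icc 1 n) m (fun i => c i)]
    rw [hL, hR]
    by_cases h0 : m = 0
    · simp [h0]
    · simp only [h0, if_false, Finset.mem_Icc, if_pos (by omega : 1 ≤ m ∧ m ≤ n)]
  have hdvd : (X : ℚ⟦X⟧) ^ (n + 1) ∣ u - U :=
    X_pow_dvd_iff.2 fun m hm => by
      rw [map_sub, hcoeff_u m (Nat.lt_succ_iff.1 hm), sub_self]
  have hpow : ∀ k, coeff n (u ^ k) = coeff n (U ^ k) := by
    intro k
    have hd := dvd_trans hdvd (sub_dvd_pow_sub_pow u U k)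
    have h0 := X_pow_dvd_iff.1 hd n (Nat.lt_succ_self n)
    rw [map_sub, sub_eq_zero] at h0
    exact h0
  have hgeom : bernoulliPowerSeries ℚ
      = (∑ k ∈ range (n + 1), u ^ k) + bernoulliPowerSeries ℚ * u ^ (n + 1) := by
    have h1 : (∑ k ∈ range (n + 1), u ^ k) * (u - 1) = u ^ (n + 1) - 1 :=
      geom_sum_mul u (n + 1)
    have h3 : (∑ k ∈ range (n + 1), u ^ k) * F + u ^ (n + 1) = 1 := by
      have hF : F = -(u - 1) := by rw [hu]; ring
      rw [hF]
      linear_combination -h1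
    calc bernoulliPowerSeries ℚ
        = bernoulliPowerSeries ℚ * ((∑ k ∈ range (n + 1), u ^ k) * F + u ^ (n + 1)) := by
          rw [h3, mul_one]
      _ = (bernoulliPowerSeries ℚ * F) * (∑ k ∈ range (n + 1), u ^ k)
            + bernoulliPowerSeries ℚ * u ^ (n + 1) := by ring
      _ = _ := by rw [B_mul_F, one_mul]
  have hcB : coeff n (bernoulliPowerSeries ℚ) = ∑ k ∈ range (n + 1), coeff n (U ^ k) := by
    have h4 := congrArg (coeff n) hgeom
    rw [map_add, map_sum, coeff_mul_pow_eq_zero (Nat.lt_succ_self n) hu0, add_zero] at h4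
    simp_rw [hpow] at h4
    exact h4
  have hUk : ∀ k, coeff n (U ^ k) = ∑ t ∈ piAntidiag (Icc 1 n) k,
      (Nat.multinomial (Icc 1 n) t : ℚ) *
        (if ∑ i ∈ Icc 1 n, i * t i = n then ∏ i ∈ Icc 1 n, c i ^ t i else 0) := by
    intro k
    rw [hU, Finset.sum_pow_eq_sum_piAntidiag, map_sum]
    refine Finset.sum_congr rfl fun t ht => ?_
    have hprod : ∏ i ∈ Icc 1 n, (PowerSeries.C (c i) * X ^ i) ^ t i
        = PowerSeries.C (∏ i ∈ Icc 1 n, c i ^ t i) * X ^ (∑ i ∈ Icc 1 n, i * t i) := by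
      simp_rw [mul_pow, ← map_pow, ← pow_mul]
      rw [Finset.prod_mul_distrib, ← map_prod, Finset.prod_pow_eq_pow_sum]
    rw [hprod, ← map_natCast (PowerSeries.C (R := ℚ)) (Nat.multinomial (Icc 1 n) t), ← mul_assoc,
      ← map_mul, coeff_C_mul, coeff_X_pow]
    by_cases hcase : ∑ i ∈ Icc 1 n, i * t i = n
    · simp [hcase, mul_assoc]
    · simp [hcase, Ne.symm hcase]
  have hBn : coeff n (bernoulliPowerSeries ℚ) = bernoulli n / n.factorial := by
    simp [bernoulliPowerSeries, coeff_mk]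
  have hkey : ∑ k ∈ range (n + 1), coeff n (U ^ k)
      = ∑ t ∈ Finset.univ.filter (fun t : Fin n → Fin (n + 1) =>
          ∑ j : Fin n, ((j : ℕ) + 1) * (t j : ℕ) = n),
        ((∑ j : Fin n, (t j : ℕ)).factorial : ℚ) / (∏ j : Fin n, ((t j : ℕ).factorial : ℚ)) *
          (-1 : ℚ) ^ (∑ j : Fin n, (t j : ℕ)) *
          ∏ j : Fin n, ((1 : ℚ) / (((j : ℕ) + 2).factorial : ℚ)) ^ (t j : ℕ) := by
    simp_rw [hUk, mul_ite, mul_zero]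
    rw [← Finset.sum_sigma (range (n + 1)) (fun k => piAntidiag (Icc 1 n) k)
        (fun p => if ∑ i ∈ Icc 1 n, i * p.2 i = n then
          (Nat.multinomial (Icc 1 n) p.2 : ℚ) * ∏ i ∈ Icc 1 n, c i ^ p.2 i else 0)]
    rw [← Finset.sum_filter]
    refine Finset.sum_bij' (i := fun p hp => fun j : Fin n =>
        (⟨p.2 ((j : ℕ) + 1), bound (Finset.mem_filter.1 hp).2 j⟩ : Fin (n + 1)))
      (j := fun s hs => ⟨∑ j : Fin n, (s j : ℕ), psi n s⟩)
      ?_ ?_ ?_ ?_ ?_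
    · -- forward membership
      intro p hp
      rw [Finset.mem_filter] at hp ⊢
      refine ⟨Finset.mem_univ _, ?_⟩
      have h5 := hp.2
      simpa using (sum_fin_eq_Icc n (fun i => i * p.2 i)).trans h5
    · -- backward membership
      intro s hs
      rw [Finset.mem_filter] at hs
      have hcond := hs.2
      have hle : ∑ j : Fin n, (s j : ℕ) ≤ n := by
        calc ∑ j : Fin n, (s j : ℕ) ≤ ∑ j : Fin n, ((j : ℕ) + 1) * (s j : ℕ) :=
          Finset.sum_le_sum fun j _ => Nat.le_mul_of_pos_left _ (by omega)
        _ = n := hcond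
      beta_reduce
      rw [Finset.mem_filter, Finset.mem_sigma]
      dsimp only
      refine ⟨⟨Finset.mem_range.2 (by omega), ?_⟩, ?_⟩
      · rw [mem_piAntidiag]
        constructor
        · have h6 : ∑ j : Fin n, psi n s ((j : ℕ) + 1) = ∑ j : Fin n, (s j : ℕ) :=
            Finset.sum_congr rfl fun j _ => psi_succ n s j
          exact (sum_fin_eq_Icc n (psi n s)).symm.trans h6
        · intro i hi
          by_contra hmem
          exact hi (psi_not_mem n s i hmem)
      · have h7 : ∑ j : Fin n, ((j : ℕ) + 1) * psi n s ((j : ℕ) + 1)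
            = ∑ j : Fin n, ((j : ℕ) + 1) * (s j : ℕ) :=
            Finset.sum_congr rfl fun j _ => by rw [psi_succ n s j]
        exact (sum_fin_eq_Icc n (fun i => i * psi n s i)).symm.trans (h7.trans hcond)
    · -- left inverse
      intro p hp
      rw [Finset.mem_filter, Finset.mem_sigma] at hp
      obtain ⟨⟨hrange, hpi⟩, hcond⟩ := hp
      rw [mem_piAntidiag] at hpi
      refine Sigma.ext ?_ ?_
      · simpa using (sum_fin_eq_Icc n p.2).trans hpi.1
      · refine heq_of_eq (funext fun i => ?_)
        show psi n (fun j => ⟨p.2 ((j : ℕ) + 1), bound hcond j⟩) i = p.2 i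
        by_cases hi : i ∈ Icc 1 n
        · rcases Finset.mem_Icc.1 hi with ⟨h1, h2⟩
          rw [psi, dif_pos ⟨by omega, hi⟩]
          show p.2 (i - 1 + 1) = p.2 i
          exact congrArg p.2 (by omega)
        · rw [psi_not_mem n _ i hi]
          by_contra hne
          exact hi (hpi.2 i (Ne.symm hne))
    · -- right inverse
      intro s hs
      funext j
      exact Fin.ext (psi_succ n s j)
    · -- values agree
      intro p hp
      rw [Finset.mem_filter, Finset.mem_sigma] at hp
      obtain ⟨⟨hrange, hpi⟩, hcond⟩ := hp
      rw [mem_piAntidiag] at hpi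
      show (Nat.multinomial (Icc 1 n) p.2 : ℚ) * ∏ i ∈ Icc 1 n, c i ^ p.2 i
          = ((∑ j : Fin n, p.2 ((j : ℕ) + 1)).factorial : ℚ) /
              (∏ j : Fin n, ((p.2 ((j : ℕ) + 1)).factorial : ℚ)) *
            (-1 : ℚ) ^ (∑ j : Fin n, p.2 ((j : ℕ) + 1)) *
            ∏ j : Fin n, ((1 : ℚ) / (((j : ℕ) + 2).factorial : ℚ)) ^ (p.2 ((j : ℕ) + 1))
      rw [sum_fin_eq_Icc n p.2, prod_fin_eq_Icc n (fun i => ((p.2 i).factorial : ℚ)),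
        show (∏ j : Fin n, ((1 : ℚ) / (((j : ℕ) + 2).factorial : ℚ)) ^ (p.2 ((j : ℕ) + 1)))
            = ∏ i ∈ Icc 1 n, ((1 : ℚ) / ((i + 1).factorial : ℚ)) ^ p.2 i from
          prod_fin_eq_Icc n (fun i => ((1 : ℚ) / ((i + 1).factorial : ℚ)) ^ p.2 i)]
      have hmul : (Nat.multinomial (Icc 1 n) p.2 : ℚ)
          = ((∑ i ∈ Icc 1 n, p.2 i).factorial : ℚ) / ∏ i ∈ Icc 1 n, ((p.2 i).factorial : ℚ) := by
        have hspec := Nat.multinomial_spec (Icc 1 n) p.2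
        have hne : (∏ i ∈ Icc 1 n, ((p.2 i).factorial : ℚ)) ≠ 0 :=
          Finset.prod_ne_zero_iff.2 fun i _ => Nat.cast_ne_zero.2 (Nat.factorial_ne_zero _)
        rw [eq_div_iff hne, mul_comm]
        push_cast [← hspec]
        ring
      have hprod : ∏ i ∈ Icc 1 n, c i ^ p.2 i
          = (-1 : ℚ) ^ (∑ i ∈ Icc 1 n, p.2 i) *
              ∏ i ∈ Icc 1 n, ((1 : ℚ) / ((i + 1).factorial : ℚ)) ^ p.2 i := by
        rw [← Finset.prod_pow_eq_pow_sum, ← Finset.prod_mul_distrib]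
        refine Finset.prod_congr rfl fun i _ => ?_
        rw [hc, ← mul_pow]
        ring_nf
      rw [hmul, hprod]
      ring
  have hfin := hBn.symm.trans (hcB.trans hkey)
  rw [← hfin]
  field_simp
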